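/- For any graph U and any GR-rewrite rule with matching μ : P → U, the GR-rewrite step is always feasible: the span D̄(U, μ(ar)) ← SW → P (with legs D̄_μ and ρ, where ρ(ar) = ar, ρ(pr) = ρ(mr) = pr) is strongly labeled and hence has a pushout V in the category of graphs; moreover V is (isomorphic to) the graph obtained from U by redirecting all edges targeting μ(ar) to target μ(pr). -/

import Mathlib

open CategoryTheory

/-- A graph over a signature `Ω` with arity function `ar`: nodes, an (implicit) subset of
labeled nodes (those where `label` is `some`), and a successor function assigning to each
labeled node a string of nodes whose length is the arity of its label. Unlabeled nodes
have no successors. -/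
structure LGraph (Ω : Type) (ar : Ω → ℕ) where
  N : Type
  label : N → Option Ω
  succ : N → List N
  hlen : ∀ n f, label n = some f → (succ n).length = ar f
  hnone : ∀ n, label n = none → succ n = []

namespace LGraph

variable {Ω : Type} {ar : Ω → ℕ}

/-- A graph homomorphism: a map on nodes preserving labeledness, labels and successors. -/
@[ext]
structure Hom (G H : LGraph Ω ar) where
  toFun : G.N → H.N
  map_label : ∀ n f, G.label n = some f → H.label (toFun n) = some f
  map_succ : ∀ n f, G.label n = some f → H.succ (toFun n) = (G.succ n).map toFun

def Hom.id (G : LGraph Ω ar) : Hom G G :=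
  ⟨fun n => n, fun _ _ h => h, fun n _ _ => by simp⟩

def Hom.comp {G H K : LGraph Ω ar} (φ : Hom G H) (ψ : Hom H K) : Hom G K where
  toFun := fun n => ψ.toFun (φ.toFun n)
  map_label := fun n f h => ψ.map_label _ f (φ.map_label n f h)
  map_succ := fun n f h => by
    rw [ψ.map_succ _ f (φ.map_label n f h), φ.map_succ n f h, List.map_map]; rfl

instance : Category (LGraph Ω ar) where
  Hom := Hom
  id := Hom.id
  comp := Hom.comp
  id_comp := by intros; rfl
  comp_id := by intros; rfl
  assoc := by intros; rfl

/-- An edge of a graph: a labeled node together with a position among its successors. -/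
def Edge (G : LGraph Ω ar) := Σ n : G.N, Fin (G.succ n).length

lemma Edge.label_isSome {G : LGraph Ω ar} (e : G.Edge) : (G.label e.1).isSome := by
  have h2 : 0 < (G.succ e.1).length := Nat.lt_of_le_of_lt (Nat.zero_le _) e.2.isLt
  cases hl : G.label e.1 with
  | none => rw [G.hnone e.1 hl] at h2; simp at h2
  | some f => rfl

/-- The image of an edge under a homomorphism. -/
def Hom.edgeMap {G H : LGraph Ω ar} (φ : Hom G H) (e : G.Edge) : H.Edge :=
  ⟨φ.toFun e.1, ⟨e.2, by
    obtain ⟨f, hf⟩ := Option.isSome_iff_exists.mp e.label_isSome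
    rw [φ.map_succ e.1 f hf, List.length_map]; exact e.2.isLt⟩⟩

open Classical in
/-- The disconnected graph `D(G,E)`: nodes of `G` plus a fresh unlabeled node `n[i]`
for each edge `(n,i) ∈ E`, with each edge of `E` redirected to its fresh node. -/
noncomputable def D (G : LGraph Ω ar) (E : Set G.Edge) : LGraph Ω ar where
  N := G.N ⊕ {e : G.Edge // e ∈ E}
  label := Sum.elim G.label fun _ => none
  succ := Sum.elim
    (fun n => List.ofFn fun i : Fin (G.succ n).length =>
      if h : (⟨n, i⟩ : G.Edge) ∈ E then Sum.inr ⟨⟨n, i⟩, h⟩ else Sum.inl ((G.succ n).get i))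
    (fun _ => [])
  hlen := by
    rintro (n | e) f h
    · simpa using G.hlen n f h
    · simp at h
  hnone := by
    rintro (n | e) h
    · simp only [Sum.elim_inl] at h ⊢
      simp [List.ofFn_eq_nil_iff, G.hnone n h]
    · rfl

/-- The connection homomorphism `δ_{G,E} : D(G,E) → G`. -/
noncomputable def delta (G : LGraph Ω ar) (E : Set G.Edge) : Hom (G.D E) G where
  toFun := Sum.elim (fun n => n) (fun e => (G.succ e.1.1).get e.1.2)
  map_label := by
    rintro (n | e) f h
    · exact h
    · simp [D] at h
  map_succ := by
    rintro (n | e) f h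
    · simp only [D, Sum.elim_inl, List.map_ofFn]
      apply List.ext_getElem
      · simp
      · intro i h1 h2
        simp only [List.getElem_ofFn, Function.comp_apply]
        split <;> simp [List.get_eq_getElem]
    · simp [D] at h
end LGraph
namespace LGraph
variable {Ω : Type} {ar : Ω → ℕ}

/-- The underlying node map of the disconnected homomorphism `D_{φ,E}`. -/
def dmapFun {G H : LGraph Ω ar} (φ : Hom G H) (E : Set G.Edge) :
    (G.D E).N → (H.D (φ.edgeMap '' E)).N :=
  Sum.elim (fun n => Sum.inl (φ.toFun n))
    (fun e => Sum.inr ⟨φ.edgeMap e.1, Set.mem_image_of_mem _ e.2⟩)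

/-- `μ` is `Ω`-injective if it is injective on labeled nodes. -/
def OmegaInjective {G H : LGraph Ω ar} (μ : Hom G H) : Prop :=
  ∀ n n', (G.label n).isSome → (G.label n').isSome → μ.toFun n = μ.toFun n' → n = n'

/-- The conditions on the right leg `ρ : D(L,E) → R` of an LRR-rewrite rule:
unlabeled nodes of `L` are mapped to unlabeled nodes of `R`, injectively. -/
def IsLRRRule {L R : LGraph Ω ar} (E : Set L.Edge) (ρ : Hom (L.D E) R) : Prop :=
  (∀ n : L.N, L.label n = none → R.label (ρ.toFun (Sum.inl n)) = none) ∧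
  (∀ n n' : L.N, L.label n = none → L.label n' = none →
      ρ.toFun (Sum.inl n) = ρ.toFun (Sum.inl n') → n = n')

section Span
variable {G₀ G₁ G₂ : LGraph Ω ar}

/-- The relation on `N₁ + N₂` generated by a span: `φ₁(n₀) ∼ φ₂(n₀)`. -/
def spanRel (φ₁ : Hom G₀ G₁) (φ₂ : Hom G₀ G₂) : (G₁.N ⊕ G₂.N) → (G₁.N ⊕ G₂.N) → Prop :=
  fun x y => ∃ n₀, x = Sum.inl (φ₁.toFun n₀) ∧ y = Sum.inr (φ₂.toFun n₀)

/-- Label of a node of the disjoint union. -/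
def nodeLabel (G₁ G₂ : LGraph Ω ar) : (G₁.N ⊕ G₂.N) → Option Ω :=
  Sum.elim G₁.label G₂.label

/-- Successors of a node of the disjoint union. -/
def nodeSucc (G₁ G₂ : LGraph Ω ar) : (G₁.N ⊕ G₂.N) → List (G₁.N ⊕ G₂.N) :=
  Sum.elim (fun n => (G₁.succ n).map Sum.inl) (fun n => (G₂.succ n).map Sum.inr)

/-- A span of graphs is strongly labeled if in each equivalence class all labeled
nodes share the same label and have pairwise equivalent successors. -/
def StronglyLabeled (φ₁ : Hom G₀ G₁) (φ₂ : Hom G₀ G₂) : Prop :=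
  ∀ x y, Relation.EqvGen (spanRel φ₁ φ₂) x y →
    ∀ f g, nodeLabel G₁ G₂ x = some f → nodeLabel G₁ G₂ y = some g →
      f = g ∧ List.Forall₂ (Relation.EqvGen (spanRel φ₁ φ₂)) (nodeSucc G₁ G₂ x) (nodeSucc G₁ G₂ y)

open Classical in
/-- The candidate pushout graph of a span: nodes are the quotient of `N₁ + N₂`,
labeled classes are those containing a labeled node, labels and successors are
taken from a (chosen) labeled representative. -/
noncomputable def pushoutGraph (φ₁ : Hom G₀ G₁) (φ₂ : Hom G₀ G₂) : LGraph Ω ar where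
  N := Quot (spanRel φ₁ φ₂)
  label := fun c =>
    if h : ∃ x, Quot.mk _ x = c ∧ (nodeLabel G₁ G₂ x).isSome
    then nodeLabel G₁ G₂ h.choose else none
  succ := fun c =>
    if h : ∃ x, Quot.mk _ x = c ∧ (nodeLabel G₁ G₂ x).isSome
    then (nodeSucc G₁ G₂ h.choose).map (Quot.mk _) else []
  hlen := by
    intro c f h
    try dsimp only at h ⊢
    by_cases hx : ∃ x, Quot.mk _ x = c ∧ (nodeLabel G₁ G₂ x).isSome
    · rw [dif_pos hx] at h ⊢
      rw [List.length_map]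
      rcases hc : hx.choose with n | n <;> rw [hc] at h <;>
        simp only [nodeLabel, nodeSucc, Sum.elim_inl, Sum.elim_inr] at h ⊢ <;>
        rw [List.length_map]
      · exact G₁.hlen n f h
      · exact G₂.hlen n f h
    · rw [dif_neg hx] at h; simp at h
  hnone := by
    intro c h
    try dsimp only at h ⊢
    by_cases hx : ∃ x, Quot.mk _ x = c ∧ (nodeLabel G₁ G₂ x).isSome
    · rw [dif_pos hx] at h
      have := hx.choose_spec.2
      rw [h] at this; simp at this
    · rw [dif_neg hx]

end Span

open Classical in
/-- The disconnected graph `D̄(G,o)`: `G` plus a fresh unlabeled node `mr`, with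
all edges targeting `o` redirected to `mr`. -/
noncomputable def Dbar (G : LGraph Ω ar) (o : G.N) : LGraph Ω ar where
  N := G.N ⊕ Unit
  label := Sum.elim G.label fun _ => none
  succ := Sum.elim
    (fun n => (G.succ n).map fun t => if t = o then Sum.inr () else Sum.inl t)
    (fun _ => [])
  hlen := by
    rintro (n | u) f h
    · simp only [Sum.elim_inl] at h ⊢
      rw [List.length_map]; exact G.hlen n f h
    · simp at h
  hnone := by
    rintro (n | u) h
    · simp only [Sum.elim_inl] at h ⊢
      rw [G.hnone n h]; rfl
    · rfl

open Classical in
/-- The homomorphism `δ_μ : D̄(G,o) → G`, identity on `N_G`, sending `mr` to `o`. -/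
noncomputable def deltaBar (G : LGraph Ω ar) (o : G.N) : Hom (G.Dbar o) G where
  toFun := Sum.elim (fun n => n) fun _ => o
  map_label := by
    rintro (n | u) f h
    · exact h
    · simp [Dbar] at h
  map_succ := by
    rintro (n | u) f h
    · simp only [Dbar, Sum.elim_inl, List.map_map]
      symm
      refine (List.map_congr_left ?_).trans (List.map_id _)
      intro t ht
      by_cases h' : t = o <;> simp [h']
    · simp [Dbar] at h

open Classical in
/-- The graph obtained from `U` by redirecting all edges targeting `a` towards `b`. -/
noncomputable def redirect (U : LGraph Ω ar) (a b : U.N) : LGraph Ω ar where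
  N := U.N
  label := U.label
  succ := fun n => (U.succ n).map fun t => if t = a then b else t
  hlen := by intro n f h; (try dsimp only); rw [List.length_map]; exact U.hlen n f h
  hnone := by intro n h; (try dsimp only); rw [U.hnone n h]; rfl

/-- The graph `P` with two unlabeled nodes: `false` is `ar`, `true` is `pr`. -/
def P (Ω : Type) (ar : Ω → ℕ) : LGraph Ω ar :=
  ⟨Bool, fun _ => none, fun _ => [], fun _ _ h => by simp at h, fun _ _ => rfl⟩

/-- The switch graph `SW` with three unlabeled nodes: `some false` is `ar`,
`some true` is `pr`, `none` is `mr`. -/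
def SW (Ω : Type) (ar : Ω → ℕ) : LGraph Ω ar :=
  ⟨Option Bool, fun _ => none, fun _ => [], fun _ _ h => by simp at h, fun _ _ => rfl⟩

/-- `λ : SW → P`, sending `ar, mr ↦ ar` and `pr ↦ pr`. -/
def lamGR : Hom (SW Ω ar) (P Ω ar) :=
  ⟨fun x => x.getD false, fun _ _ h => by simp [SW] at h, fun _ _ h => by simp [SW] at h⟩

/-- `ρ : SW → P`, sending `ar ↦ ar` and `pr, mr ↦ pr`. -/
def rhoGR : Hom (SW Ω ar) (P Ω ar) :=
  ⟨fun x => x.getD true, fun _ _ h => by simp [SW] at h, fun _ _ h => by simp [SW] at h⟩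

/-- `D̄_μ : SW → D̄(U, μ(ar))`. -/
noncomputable def dbarMu {U : LGraph Ω ar} (μ : Hom (P Ω ar) U) :
    Hom (SW Ω ar) (U.Dbar (μ.toFun false)) where
  toFun := fun x => match x with
    | some b => Sum.inl (μ.toFun b)
    | none => Sum.inr ()
  map_label := fun _ _ h => by simp [SW] at h
  map_succ := fun _ _ h => by simp [SW] at h

/-- A graph with a single unlabeled node. -/
def oneUnlabeled (Ω : Type) (ar : Ω → ℕ) : LGraph Ω ar :=
  ⟨PUnit, fun _ => none, fun _ => [], fun _ _ h => by simp at h, fun _ _ => rfl⟩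

/-- A graph with a single node labeled `a` (looping on itself `ar a` times). -/
def singleLabeled (a : Ω) : LGraph Ω ar :=
  ⟨PUnit, fun _ => some a, fun _ => List.replicate (ar a) PUnit.unit,
   fun _ f h => by cases h; simp, fun _ h => by simp at h⟩

/-- The unique homomorphism from the one-point unlabeled graph to `singleLabeled a`. -/
def toSingle (a : Ω) : Hom (oneUnlabeled Ω ar) (singleLabeled a) :=
  ⟨fun _ => PUnit.unit, fun _ _ h => by simp [oneUnlabeled] at h,
   fun _ _ h => by simp [oneUnlabeled] at h⟩

end LGraph


namespace GRFeasible

open LGraph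

variable {Ω : Type} {ar : Ω → ℕ} (U : LGraph Ω ar) (μ : LGraph.Hom (LGraph.P Ω ar) U)

/-- Collapse map used to show the span relation respects a node-valued invariant. -/
def collapse : ((U.Dbar (μ.toFun false)).N ⊕ (LGraph.P Ω ar).N) → U.N :=
  Sum.elim (Sum.elim (fun n => n) (fun _ => μ.toFun true)) (fun b => μ.toFun b)

lemma collapse_eqvGen {x y} (h : Relation.EqvGen (spanRel (dbarMu μ) rhoGR) x y) :
    collapse U μ x = collapse U μ y := by
  induction h with
  | rel x y h =>
    obtain ⟨n₀, rfl, rfl⟩ := h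
    cases n₀ with
    | none => rfl
    | some b => cases b <;> rfl
  | refl => rfl
  | symm _ _ _ ih => exact ih.symm
  | trans _ _ _ _ _ ih₁ ih₂ => exact ih₁.trans ih₂

lemma labeled_eq {x y} (h : Relation.EqvGen (spanRel (dbarMu μ) rhoGR) x y)
    (hx : (nodeLabel (U.Dbar (μ.toFun false)) (LGraph.P Ω ar) x).isSome)
    (hy : (nodeLabel (U.Dbar (μ.toFun false)) (LGraph.P Ω ar) y).isSome) : x = y := by
  have hc := collapse_eqvGen U μ h
  rcases x with (n | u) | c
  · rcases y with (m | u') | c'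
    · have : n = m := hc
      rw [this]
    · simp [nodeLabel, Dbar] at hy
    · change (none : Option Ω).isSome = true at hy; simp at hy
  · simp [nodeLabel, Dbar] at hx
  · change (none : Option Ω).isSome = true at hx; simp at hx

/-- The bottom leg `ρ' : D̄(U, μ(ar)) → U[μ(ar) ↦ μ(pr)]` of the pushout square. -/
noncomputable def rhoPrime :
    LGraph.Hom (U.Dbar (μ.toFun false)) (U.redirect (μ.toFun false) (μ.toFun true)) where
  toFun := Sum.elim (fun n => n) (fun _ => μ.toFun true)
  map_label := by
    rintro (n | u) f h
    · exact h
    · simp [LGraph.Dbar] at h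
  map_succ := by
    rintro (n | u) f h
    · simp only [LGraph.Dbar, LGraph.redirect, Sum.elim_inl, List.map_map]
      refine List.map_congr_left fun t _ => ?_
      by_cases ht : t = μ.toFun false <;> simp [ht]
    · simp [LGraph.Dbar] at h

/-- The right leg `ν : P → U[μ(ar) ↦ μ(pr)]` of the pushout square. -/
noncomputable def nuHom :
    LGraph.Hom (LGraph.P Ω ar) (U.redirect (μ.toFun false) (μ.toFun true)) where
  toFun := fun c => μ.toFun c
  map_label := by intro n f h; simp [LGraph.P] at h
  map_succ := by intro n f h; simp [LGraph.P] at h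

end GRFeasible

/-- GR-rewrite steps are always feasible: the span
`D̄(U,μ(ar)) ← SW → P` (legs `D̄_μ` and `ρ`) is strongly labeled, and the graph
obtained from `U` by redirecting all edges targeting `μ(ar)` to `μ(pr)` is a pushout
of this span. -/
theorem gr_rewrite_feasible {Ω : Type} {ar : Ω → ℕ} (U : LGraph Ω ar)
    (μ : LGraph.Hom (LGraph.P Ω ar) U) :
    LGraph.StronglyLabeled (LGraph.dbarMu μ) LGraph.rhoGR ∧
    ∃ (ρ' : LGraph.Hom (U.Dbar (μ.toFun false)) (U.redirect (μ.toFun false) (μ.toFun true)))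
      (ν : LGraph.Hom (LGraph.P Ω ar) (U.redirect (μ.toFun false) (μ.toFun true))),
      IsPushout (C := LGraph Ω ar) (LGraph.dbarMu μ) LGraph.rhoGR ρ' ν := by
  classical
  constructor
  · intro x y h f g hx hy
    have hxy : x = y := GRFeasible.labeled_eq U μ h (by rw [hx]; rfl) (by rw [hy]; rfl)
    subst hxy
    refine ⟨by rw [hx] at hy; exact (Option.some.inj hy), ?_⟩
    exact List.forall₂_same.mpr fun z _ => Relation.EqvGen.refl z
  · refine ⟨GRFeasible.rhoPrime U μ, GRFeasible.nuHom U μ, ?_⟩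
    have w : (LGraph.dbarMu μ).comp (GRFeasible.rhoPrime U μ) =
        (LGraph.rhoGR).comp (GRFeasible.nuHom U μ) := by
      apply LGraph.Hom.ext
      funext x
      rcases x with _ | (_ | _) <;> rfl
    refine ⟨⟨w⟩, ⟨?_⟩⟩
    refine CategoryTheory.Limits.PushoutCocone.IsColimit.mk w
      (fun s => (⟨fun n => s.inl.toFun (Sum.inl n),
        fun n f h => s.inl.map_label (Sum.inl n) f h, by
          intro n f h
          have key : s.inl.toFun (Sum.inr ()) = s.inl.toFun (Sum.inl (μ.toFun true)) := by
            have h1 := congrFun (congrArg LGraph.Hom.toFun s.condition) (none : Option Bool)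
            have h2 := congrFun (congrArg LGraph.Hom.toFun s.condition) (some true)
            exact h1.trans h2.symm
          have hs := s.inl.map_succ (Sum.inl n) f h
          simp only [LGraph.Dbar, Sum.elim_inl, List.map_map] at hs
          simp only [LGraph.redirect, List.map_map]
          rw [hs]
          show List.map s.inl.toFun (List.map (fun t => if t = μ.toFun false then Sum.inr () else Sum.inl t) (U.succ n)) = _
          rw [List.map_map]
          refine List.map_congr_left fun t _ => ?_
          by_cases ht : t = μ.toFun false <;> simp [ht, Function.comp, key]⟩ :
        LGraph.Hom (U.redirect (μ.toFun false) (μ.toFun true)) s.pt)) ?_ ?_ ?_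
    · intro s
      apply LGraph.Hom.ext
      funext x
      rcases x with n | u
      · rfl
      · have h1 := congrFun (congrArg LGraph.Hom.toFun s.condition) (none : Option Bool)
        have h2 := congrFun (congrArg LGraph.Hom.toFun s.condition) (some true)
        exact (h1.trans h2.symm).symm
    · intro s
      apply LGraph.Hom.ext
      funext c
      have h := congrFun (congrArg LGraph.Hom.toFun s.condition) (some c)
      show s.inl.toFun (Sum.inl (μ.toFun c)) = s.inr.toFun c
      exact (show s.inl.toFun (Sum.inl (μ.toFun c)) = s.inr.toFun c from h).symm.symm
    · intro s m hm₁ hm₂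
      apply LGraph.Hom.ext
      funext n
      exact congrFun (congrArg LGraph.Hom.toFun hm₁) (Sum.inl n)
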